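/- Let p ≥ 2, q ≥ 2, and 0 ≤ c ≤ q, and in the Hsu-grid HG_{p,q} let A = {v_{i,j} : 1 ≤ i ≤ p, 1 ≤ j ≤ c} be the set of vertices in the first c columns. Then the union-count of this column-prefix cut satisfies U(A) ≤ p + 1: every set N(Y)∖A with Y ⊆ A is of the form {v_{i',c+1} : i' ≥ l} for some l, so there are at most p+1 distinct such sets. (This underlies the bound βw(HG_{p,q}) ≤ 2 log p via vertical decomposition trees.) -/

import Mathlib

open Classical in
/-- The cut matrix of `A`: rows indexed by `A`, columns by its complement, over GF(2),
with `(x,y)` entry `1` iff `x` and `y` are adjacent. -/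
noncomputable def cutMatrix {V : Type*} [Fintype V] [DecidableEq V]
    (G : SimpleGraph V) (A : Finset V) : Matrix ↥A ↥(Aᶜ) (ZMod 2) :=
  Matrix.of fun x y => if G.Adj x.1 y.1 then 1 else 0

/-- The cut-rank `ρ_G(A)`: the GF(2)-rank of the cut matrix of `A`. -/
noncomputable def cutRank {V : Type*} [Fintype V] [DecidableEq V]
    (G : SimpleGraph V) (A : Finset V) : ℕ :=
  (cutMatrix G A).rank

/-- The union-count `U_G(A)`: the number of distinct sets `N(Y) \ A` over `Y ⊆ A`. -/
noncomputable def unionCount {V : Type*} [Fintype V] [DecidableEq V]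
    (G : SimpleGraph V) (A : Finset V) : ℕ :=
  Set.ncard {S : Set V | ∃ Y : Set V, Y ⊆ ↑A ∧ (⋃ y ∈ Y, G.neighborSet y) \ ↑A = S}

/-- `nss_G(A)`: the number of distinct GF(2)-linear spans of subsets of rows of the
cut matrix of `A`. -/
noncomputable def nss {V : Type*} [Fintype V] [DecidableEq V]
    (G : SimpleGraph V) (A : Finset V) : ℕ :=
  Set.ncard {W : Submodule (ZMod 2) (↥(Aᶜ) → ZMod 2) |
    ∃ S : Set ↥A, W = Submodule.span (ZMod 2) ((fun x => cutMatrix G A x) '' S)}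

/-- The Hsu-grid `HG_{p,q}` (0-indexed): vertex set `Fin p × Fin q` (`v_{i,j}` has row
`i` and column `j`), with edges `v_{i,j} ~ v_{i+1,j}` (consecutive rows, same column)
and `v_{i,j} ~ v_{i',j+1}` for `i ≤ i'` (Hsu edges between consecutive columns). -/
def hsuGrid (p q : ℕ) : SimpleGraph (Fin p × Fin q) where
  Adj x y :=
    (x.2 = y.2 ∧ ((x.1 : ℕ) + 1 = (y.1 : ℕ) ∨ (y.1 : ℕ) + 1 = (x.1 : ℕ))) ∨
    ((x.2 : ℕ) + 1 = (y.2 : ℕ) ∧ (x.1 : ℕ) ≤ (y.1 : ℕ)) ∨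
    ((y.2 : ℕ) + 1 = (x.2 : ℕ) ∧ (y.1 : ℕ) ≤ (x.1 : ℕ))
  symm := by
    constructor
    rintro x y (⟨h1, h2⟩ | ⟨h1, h2⟩ | ⟨h1, h2⟩)
    · exact Or.inl ⟨h1.symm, h2.symm⟩
    · exact Or.inr (Or.inr ⟨h1, h2⟩)
    · exact Or.inr (Or.inl ⟨h1, h2⟩)
  loopless := by
    constructor
    rintro x (⟨-, h⟩ | ⟨h, -⟩ | ⟨h, -⟩) <;> omega

/-- in the Hsu-grid `HG_{p,q}`, the cut given by the first `c` columns
(vertices `v_{i,j}` with `j < c`, 0-indexed) has union-count at most `p + 1`: every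
set `N(Y) ∖ A` with `Y ⊆ A` is a final segment of column `c`, so there are at most
`p + 1` distinct such sets. -/
theorem hsuGrid_column_prefix_unionCount (p q c : ℕ) (hp : 2 ≤ p) (hq : 2 ≤ q)
    (hc : c ≤ q) :
    unionCount (hsuGrid p q)
        (Finset.univ.filter (fun x : Fin p × Fin q => (x.2 : ℕ) < c)) ≤ p + 1 := by
  classical
  set A : Finset (Fin p × Fin q) :=
    Finset.univ.filter (fun x : Fin p × Fin q => (x.2 : ℕ) < c) with hA
  have hmemA : ∀ x : Fin p × Fin q, x ∈ (A : Set (Fin p × Fin q)) ↔ (x.2 : ℕ) < c := by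
    intro x; simp [hA]
  have hsub : {S : Set (Fin p × Fin q) | ∃ Y : Set (Fin p × Fin q), Y ⊆ ↑A ∧
      (⋃ y ∈ Y, (hsuGrid p q).neighborSet y) \ ↑A = S} ⊆
      Set.range (fun l : Fin (p+1) =>
        {z : Fin p × Fin q | (z.2 : ℕ) = c ∧ (l : ℕ) ≤ (z.1 : ℕ)}) := by
    rintro S ⟨Y, hY, rfl⟩
    have hmemS : ∀ z : Fin p × Fin q,
        z ∈ (⋃ y ∈ Y, (hsuGrid p q).neighborSet y) \ (A : Set (Fin p × Fin q)) ↔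
        ((z.2 : ℕ) = c ∧ ∃ y ∈ Y, (y.2 : ℕ) + 1 = c ∧ (y.1 : ℕ) ≤ (z.1 : ℕ)) := by
      intro z
      constructor
      · rintro ⟨hz1, hz2⟩
        rw [hmemA] at hz2
        push_neg at hz2
        simp only [Set.mem_iUnion, SimpleGraph.mem_neighborSet] at hz1
        obtain ⟨y, hyY, hadj⟩ := hz1
        have hyA : (y.2 : ℕ) < c := (hmemA y).mp (hY hyY)
        rcases hadj with ⟨h1, h2⟩ | ⟨h1, h2⟩ | ⟨h1, h2⟩
        · exfalso; rw [← h1] at hz2; omega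
        · exact ⟨by omega, y, hyY, by omega, h2⟩
        · exfalso; omega
      · rintro ⟨hzc, y, hyY, hyc, hyle⟩
        constructor
        · simp only [Set.mem_iUnion, SimpleGraph.mem_neighborSet]
          exact ⟨y, hyY, Or.inr (Or.inl ⟨by omega, hyle⟩)⟩
        · rw [hmemA]; omega
    by_cases hex : ∃ n : ℕ, ∃ y ∈ Y, (y.2 : ℕ) + 1 = c ∧ (y.1 : ℕ) = n
    · obtain ⟨y₀, hy₀Y, hy₀c, hy₀l⟩ := Nat.sInf_mem hex
      have hy₀l' : (y₀.1 : ℕ) = sInf {n : ℕ | ∃ y ∈ Y, (y.2 : ℕ) + 1 = c ∧ (y.1 : ℕ) = n} :=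
        hy₀l
      refine ⟨⟨sInf {n : ℕ | ∃ y ∈ Y, (y.2 : ℕ) + 1 = c ∧ (y.1 : ℕ) = n},
        by have := y₀.1.isLt; omega⟩, ?_⟩
      ext z
      show ((z.2 : ℕ) = c ∧ _ ≤ (z.1 : ℕ)) ↔ _
      rw [hmemS z] ; simp only [Fin.val_mk]
      constructor
      · rintro ⟨hzc, hlz⟩
        exact ⟨hzc, y₀, hy₀Y, hy₀c, by omega⟩
      · rintro ⟨hzc, y, hyY, hyc, hyle⟩
        exact ⟨hzc, le_trans (Nat.sInf_le ⟨y, hyY, hyc, rfl⟩) hyle⟩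
    · push_neg at hex
      refine ⟨⟨p, by omega⟩, ?_⟩
      ext z
      show ((z.2 : ℕ) = c ∧ _ ≤ (z.1 : ℕ)) ↔ _
      rw [hmemS z] ; simp only [Fin.val_mk]
      constructor
      · rintro ⟨hzc, hlz⟩
        exact absurd hlz (by have := z.1.isLt; omega)
      · rintro ⟨hzc, y, hyY, hyc, hyle⟩
        exact absurd rfl (hex (y.1 : ℕ) y hyY hyc)
  calc unionCount (hsuGrid p q) A
      ≤ (Set.range (fun l : Fin (p+1) =>
          {z : Fin p × Fin q | (z.2 : ℕ) = c ∧ (l : ℕ) ≤ (z.1 : ℕ)})).ncard :=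
        Set.ncard_le_ncard hsub (Set.finite_range _)
    _ ≤ p + 1 := by
        rw [← Set.image_univ]
        refine le_trans (Set.ncard_image_le Set.finite_univ) ?_
        simp [Set.ncard_univ]
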